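/- arXiv:0708.1428 — 2 statements merged into one kernel-verified Lean document; each statement's English description precedes it below -/
import Mathlib

section
/- Assume each diagonal form a_{ii} is H_i-elliptic with some constants (α_i, ω_i), and that for every pair i ≠ j there exist α ∈ [0,1) and C ≥ 0 such that either |a_{ij}(f,g)| ≤ C‖f‖_{V_j} ‖g‖_{V_i}^α ‖g‖_{H_i}^{1−α} for all f ∈ V_j, g ∈ V_i, or |a_{ij}(f,g)| ≤ C‖f‖_{V_j}^α ‖f‖_{H_j}^{1−α} ‖g‖_{V_i} for all f ∈ V_j, g ∈ V_i. Then the form 𝔞 is ℋ-elliptic, i.e., there exist constants α > 0 and ω ≥ 0 such that Re 𝔞(𝔣,𝔣) ≥ α‖𝔣‖_𝒱² − ω‖𝔣‖_ℋ² for all 𝔣 ∈ 𝒱. -/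
open Finset

lemma interp_aux {y z δ α : ℝ} (hy : 0 ≤ y) (hz : 0 ≤ z) (hδ : 0 < δ)
    (hα0 : 0 ≤ α) (hα1 : α ≤ 1) :
    y ^ α * z ^ (1 - α) ≤ δ ^ (1 - α) * y + δ ^ (-α) * z := by
  have hyα : (0:ℝ) ≤ y ^ α := Real.rpow_nonneg hy _
  have h1α : (0:ℝ) ≤ 1 - α := by linarith
  rcases le_total z (δ * y) with h | h
  · have h1 : z ^ (1-α) ≤ (δ*y)^(1-α) := Real.rpow_le_rpow hz h h1α
    have h2 : (δ*y)^(1-α) = δ^(1-α) * y^(1-α) := Real.mul_rpow hδ.le hy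
    have h3 : y^α * y^(1-α) = y := by
      rw [← Real.rpow_add' hy (by norm_num)]
      norm_num
    calc y^α * z^(1-α) ≤ y^α * (δ^(1-α)*y^(1-α)) := by
          rw [← h2]; exact mul_le_mul_of_nonneg_left h1 hyα
      _ = δ^(1-α) * (y^α * y^(1-α)) := by ring
      _ = δ^(1-α) * y := by rw [h3]
      _ ≤ _ := le_add_of_nonneg_right (by positivity)
  · have hy' : y ≤ δ⁻¹ * z := by
      rw [le_inv_mul_iff₀ hδ]; linarith
    have h1 : y ^ α ≤ (δ⁻¹ * z) ^ α := Real.rpow_le_rpow hy hy' hα0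
    have h2 : (δ⁻¹ * z) ^ α = δ^(-α) * z^α := by
      rw [Real.mul_rpow (by positivity) hz, Real.inv_rpow hδ.le, ← Real.rpow_neg hδ.le]
    have h3 : z^α * z^(1-α) = z := by
      rw [← Real.rpow_add' hz (by norm_num)]
      norm_num
    calc y^α * z^(1-α) ≤ (δ^(-α) * z^α) * z^(1-α) := by
          rw [← h2]; exact mul_le_mul_of_nonneg_right h1 (Real.rpow_nonneg hz _)
      _ = δ^(-α) * (z^α * z^(1-α)) := by ring
      _ = δ^(-α) * z := by rw [h3]
      _ ≤ _ := le_add_of_nonneg_left (by positivity)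

lemma young_aux (C α ε : ℝ) (hC : 0 ≤ C) (hα0 : 0 ≤ α) (hα1 : α < 1) (hε : 0 < ε) :
    ∃ K ≥ (0:ℝ), ∀ x y z : ℝ, 0 ≤ x → 0 ≤ y → 0 ≤ z →
      C * x * y ^ α * z ^ (1 - α) ≤ ε * x^2 + ε * y^2 + K * z^2 := by
  have h1α : (0:ℝ) < 1 - α := by linarith
  set δ : ℝ := (ε / (C+1)) ^ (1/(1-α)) with hδdef
  have hδpos : 0 < δ := Real.rpow_pos_of_pos (by positivity) _
  have hδpow : δ ^ (1-α) = ε/(C+1) := by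
    rw [hδdef, ← Real.rpow_mul (by positivity)]
    rw [one_div, inv_mul_cancel₀ h1α.ne', Real.rpow_one]
  have hCδ : C * δ^(1-α) ≤ ε := by
    rw [hδpow]
    calc C*(ε/(C+1)) = ε*(C/(C+1)) := by ring
      _ ≤ ε*1 := mul_le_mul_of_nonneg_left ((div_le_one (by positivity)).mpr (by linarith)) hε.le
      _ = ε := mul_one ε
  have hQ : (0:ℝ) ≤ δ^(-α) := Real.rpow_nonneg hδpos.le _
  refine ⟨(C * δ^(-α))^2/(2*ε), by positivity, fun x y z hx hy hz => ?_⟩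
  have h1 : y^α * z^(1-α) ≤ δ^(1-α)*y + δ^(-α)*z := interp_aux hy hz hδpos hα0 hα1.le
  have h2 : C*x*y^α*z^(1-α) ≤ C*x*(δ^(1-α)*y + δ^(-α)*z) := by
    have h := mul_le_mul_of_nonneg_left h1 (by positivity : (0:ℝ) ≤ C*x)
    calc C*x*y^α*z^(1-α) = C*x*(y^α*z^(1-α)) := by ring
      _ ≤ _ := h
  have hxy : C*δ^(1-α)*(x*y) ≤ ε*(x*y) :=
    mul_le_mul_of_nonneg_right hCδ (mul_nonneg hx hy)
  set K : ℝ := (C * δ^(-α))^2/(2*ε) with hKdef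
  have hK2 : (C*δ^(-α))^2 = 2*ε*K := by rw [hKdef]; field_simp
  have h4 : 2*ε*(C*δ^(-α)*(x*z)) ≤ 2*ε*(ε/2*x^2 + K*z^2) := by
    nlinarith [sq_nonneg (ε*x - C*δ^(-α)*z)]
  have h4' : C*δ^(-α)*(x*z) ≤ ε/2*x^2 + K*z^2 :=
    le_of_mul_le_mul_left (by linarith) (by positivity : (0:ℝ) < 2*ε)
  nlinarith [sq_nonneg (x - y)]


/-- If each diagonal form `a i i` is `H i`-elliptic and every off-diagonal
form `a i j` satisfies an interpolation-type continuity estimate (in one of the two variables),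
then the form matrix `𝔞(𝔣,𝔤) = ∑ᵢⱼ a i j (f j) (g i)` is `ℋ`-elliptic. -/
theorem stmt2 {m : ℕ} (hm : 1 ≤ m)
    (H V : Fin m → Type*)
    [∀ i, NormedAddCommGroup (H i)] [∀ i, InnerProductSpace ℂ (H i)] [∀ i, CompleteSpace (H i)]
    [∀ i, NormedAddCommGroup (V i)] [∀ i, InnerProductSpace ℂ (V i)] [∀ i, CompleteSpace (V i)]
    (J : ∀ i, V i →L[ℂ] H i)
    (hJinj : ∀ i, Function.Injective (J i)) (hJdense : ∀ i, DenseRange (J i))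
    (a : ∀ i j, V j →ₗ[ℂ] V i →ₛₗ[starRingEnd ℂ] ℂ)
    (hdiag : ∀ i, ∃ αi > (0 : ℝ), ∃ ωi ≥ (0 : ℝ), ∀ f : V i,
      αi * ‖f‖ ^ 2 - ωi * ‖J i f‖ ^ 2 ≤ (a i i f f).re)
    (hoff : ∀ i j, i ≠ j → ∃ α : ℝ, 0 ≤ α ∧ α < 1 ∧ ∃ C ≥ (0 : ℝ),
      (∀ (f : V j) (g : V i),
        ‖a i j f g‖ ≤ C * ‖f‖ * ‖g‖ ^ α * ‖J i g‖ ^ (1 - α)) ∨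
      (∀ (f : V j) (g : V i),
        ‖a i j f g‖ ≤ C * ‖f‖ ^ α * ‖J j f‖ ^ (1 - α) * ‖g‖)) :
    ∃ α > (0 : ℝ), ∃ ω ≥ (0 : ℝ), ∀ f : ∀ i, V i,
      α * (∑ i, ‖f i‖ ^ 2) - ω * (∑ i, ‖J i (f i)‖ ^ 2) ≤
        (∑ i, ∑ j, a i j (f j) (f i)).re := by
  choose αd hαd ωd hωd hdb using hdiag
  choose β hβ0 hβ1 C hC hab using hoff
  have hne : (univ : Finset (Fin m)).Nonempty := ⟨⟨0, hm⟩, mem_univ _⟩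
  set a0 : ℝ := univ.inf' hne αd with ha0def
  have ha0pos : 0 < a0 := (Finset.lt_inf'_iff hne).mpr fun i _ => hαd i
  have hmpos : (0:ℝ) < (m:ℝ) := by exact_mod_cast hm
  set ε : ℝ := a0 / (4 * (m:ℝ)^2) with hεdef
  have hεpos : 0 < ε := div_pos ha0pos (by nlinarith)
  have key : ∀ i j, i ≠ j → ∃ K ≥ (0:ℝ), ∀ (f : V j) (g : V i),
      ‖a i j f g‖ ≤
        ε*‖f‖^2 + ε*‖g‖^2 + K*(‖J j f‖^2 + ‖J i g‖^2) := by
    intro i j h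
    obtain ⟨K, hK0, hKb⟩ :=
      young_aux (C i j h) (β i j h) ε (hC i j h) (hβ0 i j h) (hβ1 i j h) hεpos
    refine ⟨K, hK0, fun f g => ?_⟩
    rcases hab i j h with hcase | hcase
    · calc ‖a i j f g‖
          ≤ C i j h * ‖f‖ * ‖g‖ ^ β i j h * ‖J i g‖ ^ (1 - β i j h) := hcase f g
        _ ≤ ε*‖f‖^2 + ε*‖g‖^2 + K*‖J i g‖^2 :=
            hKb _ _ _ (norm_nonneg _) (norm_nonneg _) (norm_nonneg _)
        _ ≤ _ := by nlinarith [sq_nonneg ‖J j f‖]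
    · calc ‖a i j f g‖
          ≤ C i j h * ‖f‖ ^ β i j h * ‖J j f‖ ^ (1 - β i j h) * ‖g‖ := hcase f g
        _ = C i j h * ‖g‖ * ‖f‖ ^ β i j h * ‖J j f‖ ^ (1 - β i j h) := by ring
        _ ≤ ε*‖g‖^2 + ε*‖f‖^2 + K*‖J j f‖^2 :=
            hKb _ _ _ (norm_nonneg _) (norm_nonneg _) (norm_nonneg _)
        _ ≤ _ := by nlinarith [sq_nonneg ‖J i g‖]
  choose K hK0 hKb using key
  set K' : Fin m → Fin m → ℝ := fun i j => if h : i ≠ j then K i j h else 0 with hK'def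
  have hK'0 : ∀ i j, 0 ≤ K' i j := by
    intro i j
    by_cases h : i ≠ j
    · simp only [hK'def, dif_pos h]; exact hK0 i j h
    · simp only [hK'def, dif_neg h]
      exact le_refl 0
  have hωdsum : (0:ℝ) ≤ ∑ i, ωd i := Finset.sum_nonneg fun i _ => hωd i
  have hKsum : (0:ℝ) ≤ ∑ i, ∑ j, K' i j :=
    Finset.sum_nonneg fun i _ => Finset.sum_nonneg fun j _ => hK'0 i j
  refine ⟨a0/2, by positivity, (∑ i, ωd i) + 2 * ∑ i, ∑ j, K' i j, by positivity, fun f => ?_⟩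
  set T : ℝ := ∑ i, ‖f i‖^2 with hTdef
  set S : ℝ := ∑ i, ‖J i (f i)‖^2 with hSdef
  have hTi : ∀ i, ‖f i‖^2 ≤ T := fun i =>
    Finset.single_le_sum (fun k _ => sq_nonneg ‖f k‖) (mem_univ i)
  have hSi : ∀ i, ‖J i (f i)‖^2 ≤ S := fun i =>
    Finset.single_le_sum (fun k _ => sq_nonneg ‖J k (f k)‖) (mem_univ i)
  have hT0 : 0 ≤ T := Finset.sum_nonneg fun k _ => sq_nonneg _
  have hS0 : 0 ≤ S := Finset.sum_nonneg fun k _ => sq_nonneg _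
  have hre : (∑ i, ∑ j, a i j (f j) (f i)).re = ∑ i, ∑ j, (a i j (f j) (f i)).re := by
    simp [Complex.re_sum]
  rw [hre]
  have hdiag_lb : ∀ i, a0 * ‖f i‖^2 - ωd i * ‖J i (f i)‖^2 ≤ (a i i (f i) (f i)).re := by
    intro i
    refine le_trans ?_ (hdb i (f i))
    have h1 : a0 ≤ αd i := Finset.inf'_le αd (mem_univ i)
    nlinarith [sq_nonneg ‖f i‖]
  have hoff_lb : ∀ i j, j ≠ i → -(2*ε*T + 2*(K' i j)*S) ≤ (a i j (f j) (f i)).re := by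
    intro i j h
    have hij : i ≠ j := h.symm
    have h1 : ‖a i j (f j) (f i)‖ ≤ 2*ε*T + 2*(K' i j)*S := by
      have h2 := hKb i j hij (f j) (f i)
      have h3 : K' i j = K i j hij := by simp only [hK'def, dif_pos hij]
      rw [h3]
      nlinarith [hTi i, hTi j, hSi i, hSi j, hK0 i j hij, hεpos,
        mul_le_mul_of_nonneg_left (add_le_add (hSi j) (hSi i)) (hK0 i j hij)]
    have h4 := Complex.abs_re_le_norm (a i j (f j) (f i))
    have h5 := neg_abs_le (a i j (f j) (f i)).re
    linarith
  have E1 : ∑ i, (a0*‖f i‖^2 - ωd i*‖J i (f i)‖^2)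
      = a0*T - ∑ i, ωd i*‖J i (f i)‖^2 := by
    rw [Finset.sum_sub_distrib, ← Finset.mul_sum]
  have E2 : ∑ i, ωd i * ‖J i (f i)‖^2 ≤ (∑ i, ωd i) * S := by
    rw [Finset.sum_mul]
    exact Finset.sum_le_sum fun i _ => mul_le_mul_of_nonneg_left (hSi i) (hωd i)
  have E3 : ∑ i : Fin m, ∑ j : Fin m, (-(2*ε*T + 2*K' i j*S))
      = -(2*ε*T*(m:ℝ)^2 + 2*(∑ i, ∑ j, K' i j)*S) := by
    have h1 : ∀ i j : Fin m, -(2*ε*T + 2*K' i j*S) = (-(2*ε*T)) + (-(2*S))*K' i j := by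
      intro i j; ring
    simp only [h1, Finset.sum_add_distrib, Finset.sum_const, Finset.card_univ,
      Fintype.card_fin, nsmul_eq_mul, ← Finset.mul_sum]
    ring
  have E4 : 2*ε*T*(m:ℝ)^2 = a0/2*T := by
    rw [hεdef]
    field_simp
    ring
  calc a0/2 * T - ((∑ i, ωd i) + 2 * ∑ i, ∑ j, K' i j) * S
      ≤ (∑ i, (a0*‖f i‖^2 - ωd i*‖J i (f i)‖^2))
        + ∑ i : Fin m, ∑ j : Fin m, (-(2*ε*T + 2*K' i j*S)) := by
        rw [E1, E3]
        linarith
    _ ≤ (∑ i, (a i i (f i) (f i)).re)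
        + ∑ i, ∑ j ∈ univ.erase i, (a i j (f j) (f i)).re := by
        refine add_le_add (Finset.sum_le_sum fun i _ => hdiag_lb i)
          (Finset.sum_le_sum fun i _ => ?_)
        have h1 : ∑ j : Fin m, (-(2*ε*T + 2*K' i j*S))
            = (∑ j ∈ univ.erase i, (-(2*ε*T + 2*K' i j*S))) + (-(2*ε*T + 2*K' i i*S)) :=
          (Finset.sum_erase_add _ _ (mem_univ i)).symm
        have h2 : (0:ℝ) ≤ 2*ε*T + 2*K' i i*S := by
          have := hK'0 i i
          nlinarith
        have h3 : ∑ j ∈ univ.erase i, (-(2*ε*T + 2*K' i j*S))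
            ≤ ∑ j ∈ univ.erase i, (a i j (f j) (f i)).re :=
          Finset.sum_le_sum fun j hj => hoff_lb i j (Finset.ne_of_mem_erase hj)
        linarith
    _ = ∑ i, ∑ j, (a i j (f j) (f i)).re := by
        rw [← Finset.sum_add_distrib]
        exact Finset.sum_congr rfl fun i _ =>
          (Finset.add_sum_erase univ (fun j => ((a i j) (f j) (f i)).re) (mem_univ i))
end

section
/- The following are equivalent: (A) for every 𝔣 ∈ 𝒱 one has (Re 𝔣)⁺ ∈ 𝒱 (coordinatewise) and 𝔞((Re 𝔣)⁺, (Re 𝔣)⁻) is a real number ≤ 0; (B) for every i = 1,…,m: f ∈ V_i implies (Re f)⁺ ∈ V_i, and a_{ii}((Re f)⁺, (Re f)⁻) is real and ≤ 0 for all f ∈ V_i; and for all i ≠ j: a_{ij}(f,g) is real and ≤ 0 for all f ∈ V_j and g ∈ V_i with f ≥ 0 a.e. and g ≥ 0 a.e. -/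
open Finset MeasureTheory

/-- A map `a : E → F → ℂ` is sesquilinear on the pair of submodules `(V, W)`:
linear in the first variable and antilinear in the second, for arguments in `V` and `W`. -/
def SesquiOnStmt18 {E F : Type*} [AddCommGroup E] [Module ℂ E] [AddCommGroup F] [Module ℂ F]
    (V : Submodule ℂ E) (W : Submodule ℂ F) (a : E → F → ℂ) : Prop :=
  (∀ f₁ ∈ V, ∀ f₂ ∈ V, ∀ g ∈ W, a (f₁ + f₂) g = a f₁ g + a f₂ g) ∧
  (∀ (c : ℂ), ∀ f ∈ V, ∀ g ∈ W, a (c • f) g = c * a f g) ∧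
  (∀ f ∈ V, ∀ g₁ ∈ W, ∀ g₂ ∈ W, a f (g₁ + g₂) = a f g₁ + a f g₂) ∧
  (∀ (c : ℂ), ∀ f ∈ V, ∀ g ∈ W, a f (c • g) = (starRingEnd ℂ) c * a f g)

private lemma sesq_zero_left {E F : Type*} [AddCommGroup E] [Module ℂ E] [AddCommGroup F]
    [Module ℂ F] {V : Submodule ℂ E} {W : Submodule ℂ F} {a : E → F → ℂ}
    (h : SesquiOnStmt18 V W a) {g : F} (hg : g ∈ W) : a 0 g = 0 := by
  have := h.2.1 0 0 V.zero_mem g hg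
  simpa using this

private lemma sesq_zero_right {E F : Type*} [AddCommGroup E] [Module ℂ E] [AddCommGroup F]
    [Module ℂ F] {V : Submodule ℂ E} {W : Submodule ℂ F} {a : E → F → ℂ}
    (h : SesquiOnStmt18 V W a) {f : E} (hf : f ∈ V) : a f 0 = 0 := by
  have := h.2.2.2 0 f hf 0 W.zero_mem
  simpa using this

/-- criterion for positivity. -/
theorem stmt18 {m : ℕ} (hm : 1 ≤ m)
    {X : Fin m → Type*} [∀ i, MeasurableSpace (X i)]
    (μ : ∀ i, Measure (X i)) [∀ i, SigmaFinite (μ i)]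
    (V : ∀ i, Submodule ℂ (Lp ℂ 2 (μ i)))
    (a : ∀ i j : Fin m, Lp ℂ 2 (μ j) → Lp ℂ 2 (μ i) → ℂ)
    (hses : ∀ i j, SesquiOnStmt18 (V j) (V i) (a i j)) :
    (∀ f : ∀ i, Lp ℂ 2 (μ i), (∀ i, f i ∈ V i) →
        ∃ u w : ∀ i, Lp ℂ 2 (μ i),
          (∀ i, u i ∈ V i) ∧ (∀ i, w i ∈ V i) ∧
          (∀ i, ⇑(u i) =ᵐ[μ i] fun x => ((max ((f i : X i → ℂ) x).re 0 : ℝ) : ℂ)) ∧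
          (∀ i, ⇑(w i) =ᵐ[μ i] fun x => ((max (-((f i : X i → ℂ) x).re) 0 : ℝ) : ℂ)) ∧
          (∑ i, ∑ j, a i j (u j) (w i)).im = 0 ∧
          (∑ i, ∑ j, a i j (u j) (w i)).re ≤ 0) ↔
      ((∀ i, ∀ f ∈ V i,
          ∃ u w : Lp ℂ 2 (μ i), u ∈ V i ∧ w ∈ V i ∧
            (⇑u =ᵐ[μ i] fun x => ((max ((f : X i → ℂ) x).re 0 : ℝ) : ℂ)) ∧
            (⇑w =ᵐ[μ i] fun x => ((max (-((f : X i → ℂ) x).re) 0 : ℝ) : ℂ)) ∧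
            (a i i u w).im = 0 ∧ (a i i u w).re ≤ 0) ∧
        (∀ i j, i ≠ j → ∀ f ∈ V j, ∀ g ∈ V i,
          (∀ᵐ x ∂(μ j), ((f : X j → ℂ) x).im = 0 ∧ 0 ≤ ((f : X j → ℂ) x).re) →
          (∀ᵐ x ∂(μ i), ((g : X i → ℂ) x).im = 0 ∧ 0 ≤ ((g : X i → ℂ) x).re) →
          (a i j f g).im = 0 ∧ (a i j f g).re ≤ 0)) := by
  classical
  constructor
  · intro hA
    constructor
    · -- (B1)
      intro i0 f hf
      set F : ∀ k, Lp ℂ 2 (μ k) := Function.update (0 : ∀ k, Lp ℂ 2 (μ k)) i0 f with hFdef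
      have hFi0 : F i0 = f := Function.update_self _ _ _
      have hFk : ∀ k, k ≠ i0 → F k = 0 := fun k hk => Function.update_of_ne hk _ _
      have hFmem : ∀ k, F k ∈ V k := by
        intro k
        by_cases h : k = i0
        · subst h; rw [hFi0]; exact hf
        · rw [hFk k h]; exact (V k).zero_mem
      obtain ⟨u, w, hu, hw, hue, hwe, him, hre⟩ := hA F hFmem
      have hu0 : ∀ k, k ≠ i0 → u k = 0 := by
        intro k hk
        refine Lp.ext ?_
        have h1 := hue k
        rw [hFk k hk] at h1
        filter_upwards [h1, Lp.coeFn_zero ℂ 2 (μ k)] with x hx hz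
        rw [hx, hz]
        simp
      have hw0 : ∀ k, k ≠ i0 → w k = 0 := by
        intro k hk
        refine Lp.ext ?_
        have h1 := hwe k
        rw [hFk k hk] at h1
        filter_upwards [h1, Lp.coeFn_zero ℂ 2 (μ k)] with x hx hz
        rw [hx, hz]
        simp
      have hsum : (∑ i, ∑ j, a i j (u j) (w i)) = a i0 i0 (u i0) (w i0) := by
        rw [Finset.sum_eq_single i0]
        · rw [Finset.sum_eq_single i0]
          · intro j _ hj
            rw [hu0 j hj]
            exact sesq_zero_left (hses i0 j) (hw i0)
          · intro h; exact absurd (Finset.mem_univ i0) h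
        · intro i _ hi
          refine Finset.sum_eq_zero fun j _ => ?_
          rw [hw0 i hi]
          exact sesq_zero_right (hses i j) (hu j)
        · intro h; exact absurd (Finset.mem_univ i0) h
      refine ⟨u i0, w i0, hu i0, hw i0, ?_, ?_, ?_, ?_⟩
      · have := hue i0; rwa [hFi0] at this
      · have := hwe i0; rwa [hFi0] at this
      · rw [← hsum]; exact him
      · rw [← hsum]; exact hre
    · -- (B2)
      intro i0 j0 hij f hf g hg hfpos hgpos
      set F : ∀ k, Lp ℂ 2 (μ k) :=
        Function.update (Function.update (0 : ∀ k, Lp ℂ 2 (μ k)) j0 f) i0 (-g) with hFdef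
      have hFi0 : F i0 = -g := Function.update_self _ _ _
      have hFj0 : F j0 = f := by
        rw [hFdef, Function.update_of_ne (Ne.symm hij), Function.update_self]
      have hFk : ∀ k, k ≠ i0 → k ≠ j0 → F k = 0 := by
        intro k h1 h2
        rw [hFdef, Function.update_of_ne h1, Function.update_of_ne h2]
        rfl
      have hFmem : ∀ k, F k ∈ V k := by
        intro k
        by_cases h1 : k = i0
        · subst h1; rw [hFi0]; exact (V k).neg_mem hg
        · by_cases h2 : k = j0
          · subst h2; rw [hFj0]; exact hf
          · rw [hFk k h1 h2]; exact (V k).zero_mem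
      obtain ⟨u, w, hu, hw, hue, hwe, him, hre⟩ := hA F hFmem
      -- u j0 = f
      have huj0 : u j0 = f := by
        refine Lp.ext ?_
        have h1 := hue j0
        rw [hFj0] at h1
        filter_upwards [h1, hfpos] with x hx hp
        rw [hx, max_eq_left hp.2]
        exact Complex.ext (by simp) (by simp [hp.1])
      -- w i0 = g
      have hwi0 : w i0 = g := by
        refine Lp.ext ?_
        have h1 := hwe i0
        rw [hFi0] at h1
        filter_upwards [h1, hgpos, Lp.coeFn_neg g] with x hx hp hn
        rw [hx, hn]
        simp only [Pi.neg_apply, Complex.neg_re, neg_neg]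
        rw [max_eq_left hp.2]
        exact Complex.ext (by simp) (by simp [hp.1])
      -- u k = 0 for k ≠ j0
      have hu0 : ∀ k, k ≠ j0 → u k = 0 := by
        intro k hk
        refine Lp.ext ?_
        by_cases h1 : k = i0
        · subst h1
          have h2 := hue k
          rw [hFi0] at h2
          filter_upwards [h2, hgpos, Lp.coeFn_neg g, Lp.coeFn_zero ℂ 2 (μ k)]
            with x hx hp hn hz
          rw [hx, hz, hn]
          simp only [Pi.neg_apply, Complex.neg_re]
          rw [max_eq_right (neg_nonpos.mpr hp.2)]
          simp [Pi.zero_apply]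
        · have h2 := hue k
          rw [hFk k h1 hk] at h2
          filter_upwards [h2, Lp.coeFn_zero ℂ 2 (μ k)] with x hx hz
          rw [hx, hz]
          simp
      -- w k = 0 for k ≠ i0
      have hw0 : ∀ k, k ≠ i0 → w k = 0 := by
        intro k hk
        refine Lp.ext ?_
        by_cases h2 : k = j0
        · subst h2
          have h3 := hwe k
          rw [hFj0] at h3
          filter_upwards [h3, hfpos, Lp.coeFn_zero ℂ 2 (μ k)] with x hx hp hz
          rw [hx, hz]
          rw [max_eq_right (neg_nonpos.mpr hp.2)]
          simp [Pi.zero_apply]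
        · have h3 := hwe k
          rw [hFk k hk h2] at h3
          filter_upwards [h3, Lp.coeFn_zero ℂ 2 (μ k)] with x hx hz
          rw [hx, hz]
          simp
      have hsum : (∑ i, ∑ j, a i j (u j) (w i)) = a i0 j0 f g := by
        rw [Finset.sum_eq_single i0]
        · rw [Finset.sum_eq_single j0]
          · rw [huj0, hwi0]
          · intro j _ hj
            rw [hu0 j hj]
            exact sesq_zero_left (hses i0 j) (hw i0)
          · intro h; exact absurd (Finset.mem_univ j0) h
        · intro i _ hi
          refine Finset.sum_eq_zero fun j _ => ?_
          rw [hw0 i hi]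
          exact sesq_zero_right (hses i j) (hu j)
        · intro h; exact absurd (Finset.mem_univ i0) h
      rw [← hsum]
      exact ⟨him, hre⟩
  · rintro ⟨hB1, hB2⟩ f hf
    choose u w hu hw hue hwe him hre using fun i => hB1 i (f i) (hf i)
    refine ⟨u, w, hu, hw, hue, hwe, ?_, ?_⟩
    · have key : ∀ i j, (a i j (u j) (w i)).im = 0 := by
        intro i j
        by_cases h : i = j
        · subst h; exact him i
        · refine (hB2 i j h (u j) (hu j) (w i) (hw i) ?_ ?_).1
          · filter_upwards [hue j] with x hx
            rw [hx]
            exact ⟨Complex.ofReal_im _, by rw [Complex.ofReal_re]; exact le_max_right _ _⟩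
          · filter_upwards [hwe i] with x hx
            rw [hx]
            exact ⟨Complex.ofReal_im _, by rw [Complex.ofReal_re]; exact le_max_right _ _⟩
      rw [Complex.im_sum]
      refine Finset.sum_eq_zero fun i _ => ?_
      rw [Complex.im_sum]
      exact Finset.sum_eq_zero fun j _ => key i j
    · have key : ∀ i j, (a i j (u j) (w i)).re ≤ 0 := by
        intro i j
        by_cases h : i = j
        · subst h; exact hre i
        · refine (hB2 i j h (u j) (hu j) (w i) (hw i) ?_ ?_).2
          · filter_upwards [hue j] with x hx
            rw [hx]
            exact ⟨Complex.ofReal_im _, by rw [Complex.ofReal_re]; exact le_max_right _ _⟩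
          · filter_upwards [hwe i] with x hx
            rw [hx]
            exact ⟨Complex.ofReal_im _, by rw [Complex.ofReal_re]; exact le_max_right _ _⟩
      rw [Complex.re_sum]
      refine Finset.sum_nonpos fun i _ => ?_
      rw [Complex.re_sum]
      exact Finset.sum_nonpos fun j _ => key i j
end
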